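/- Let X be a compact Hausdorff non-scattered space with K = ker(X), and A a subalgebra of C(X) separating points and containing constants. If A↾K is dense in C(K), then A is dense in C(X). -/

import Mathlib

open Set
open Filter Topology

/-- The restriction algebra `A↾K`. -/
def restrictSet {X : Type*} [TopologicalSpace X] (A : Subalgebra ℂ C(X, ℂ)) (K : Set X) :
    Set C(K, ℂ) :=
  {g | ∃ f ∈ A, f.restrict K = g}

set_option linter.unusedSectionVars false
set_option maxHeartbeats 1000000

section Helpers

variable {X : Type*} [TopologicalSpace X] [CompactSpace X] [T2Space X]


/-- truncation: given h and ε>0, a continuous w with w = 0 wherever ‖h‖ ≤ ε and ‖w - h‖ ≤ ε. -/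
lemma trunc_exists (h : C(X, ℂ)) {ε : ℝ} (hε : 0 < ε) :
    ∃ w : C(X, ℂ), (∀ x, ‖h x‖ ≤ ε → w x = 0) ∧ ‖w - h‖ ≤ ε := by
  have hcont : Continuous fun x => h x - (ε / max ε ‖h x‖ : ℝ) • h x := by
    refine h.continuous.sub (Continuous.smul (f := fun x => (ε / max ε ‖h x‖ : ℝ)) ?_ h.continuous)
    exact (continuous_const.div ((continuous_const.max (h.continuous.norm)))
      (fun x => by positivity))
  refine ⟨⟨_, hcont⟩, ?_, ?_⟩
  · intro x hx
    simp only [ContinuousMap.coe_mk]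
    rw [max_eq_left hx, div_self hε.ne', one_smul, sub_self]
  · rw [ContinuousMap.norm_le _ hε.le]
    intro x
    simp only [ContinuousMap.coe_mk, ContinuousMap.sub_apply]
    have hmax : (0:ℝ) < max ε ‖h x‖ := lt_of_lt_of_le hε (le_max_left _ _)
    have : h x - (ε / max ε ‖h x‖ : ℝ) • h x - h x = -((ε / max ε ‖h x‖ : ℝ) • h x) := by ring_nf
    rw [this, norm_neg, norm_smul, Real.norm_eq_abs, abs_of_nonneg (by positivity)]
    rw [div_mul_eq_mul_div, div_le_iff₀ hmax]
    have := le_max_right ε ‖h x‖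
    nlinarith [norm_nonneg (h x)]

lemma mem_of_approx {B : Subalgebra ℂ C(X, ℂ)} (hB : IsClosed (B : Set C(X, ℂ)))
    {h : C(X, ℂ)} (happ : ∀ ε : ℝ, 0 < ε → ∃ g ∈ B, ‖h - g‖ ≤ ε) : h ∈ B := by
  have : h ∈ closure (B : Set C(X, ℂ)) := by
    rw [Metric.mem_closure_iff]
    intro ε hε
    obtain ⟨g, hg, hle⟩ := happ (ε/2) (by positivity)
    refine ⟨g, hg, ?_⟩
    rw [dist_eq_norm]
    linarith
  rwa [hB.closure_eq] at this


lemma norm_sq_re_im (z : ℂ) : ‖z‖^2 = z.re^2 + z.im^2 := by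
  rw [Complex.sq_norm, Complex.normSq_apply]; ring

lemma norm_one_sub_sq (w : ℂ) : ‖1 - w‖^2 = 1 - 2*w.re + ‖w‖^2 := by
  rw [norm_sq_re_im, norm_sq_re_im]
  simp only [Complex.sub_re, Complex.one_re, Complex.sub_im, Complex.one_im]
  ring

/-- The key contradiction at the kernel: if `p ∉ K` is norm-dominated by `K`
for all members of `A`, we contradict separation of points. -/
lemma K_contra (K : Set X) (hKcl : IsClosed K) (hKne : K.Nonempty)
    (A : Subalgebra ℂ C(X, ℂ)) (hA : A.SeparatesPoints)
    (hdense : Dense (restrictSet A K))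
    {p : X} (hpK : p ∉ K)
    (domK : ∀ f ∈ A, ∃ x ∈ K, ‖f p‖ ≤ ‖f x‖) : False := by
  haveI : CompactSpace K := isCompact_iff_compactSpace.mp hKcl.isCompact
  by_cases hagree : ∃ q ∈ K, ∀ f ∈ A, f p = f q
  · obtain ⟨q, hqK, hq⟩ := hagree
    have hpq : p ≠ q := fun h => hpK (h ▸ hqK)
    obtain ⟨f', ⟨f, hfA, rfl⟩, hfne⟩ := hA hpq
    exact hfne (hq f hfA)
  · push_neg at hagree
    -- for each q in K pick a function separating p from q, normalized to vanish at p
    have hsep : ∀ q : K, ∃ u ∈ A, u p = 0 ∧ u (q : X) ≠ 0 := by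
      intro q
      obtain ⟨f, hfA, hfne⟩ := hagree q q.2
      refine ⟨f - algebraMap ℂ C(X, ℂ) (f p), A.sub_mem hfA (A.algebraMap_mem _), ?_, ?_⟩
      · simp
      · simpa [sub_ne_zero] using hfne.symm
    choose u huA hup huq using hsep
    -- finite subcover
    have hcover : K ⊆ ⋃ q : K, {x | u q x ≠ 0} := by
      intro x hx
      exact mem_iUnion.mpr ⟨⟨x, hx⟩, huq ⟨x, hx⟩⟩
    obtain ⟨t, ht⟩ := hKcl.isCompact.elim_finite_subcover (fun q : K => {x | u q x ≠ 0})
      (fun q => isOpen_ne.preimage (u q).continuous) hcover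
    -- minimum of the sum of squares on K
    set σ : X → ℝ := fun x => ∑ q ∈ t, ‖u q x‖^2 with hσ
    have hσcont : Continuous σ := by
      apply continuous_finset_sum
      intro q _
      exact ((u q).continuous.norm).pow 2
    obtain ⟨x₀, hx₀K, hx₀min⟩ := hKcl.isCompact.exists_isMinOn hKne hσcont.continuousOn
    set c : ℝ := σ x₀ with hc
    have hcpos : 0 < c := by
      obtain ⟨q, hqt, hqx⟩ : ∃ q ∈ t, u q x₀ ≠ 0 := by
        have := ht hx₀K
        simpa using this
      refine Finset.sum_pos' (fun i _ => by positivity) ⟨q, hqt, pow_pos (norm_pos_iff.mpr hqx) 2⟩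
    have hcK : ∀ x ∈ K, c ≤ σ x := fun x hx => hx₀min hx
    set M : ℝ := ∑ q ∈ t, ‖u q‖ with hM
    have hM0 : 0 ≤ M := Finset.sum_nonneg fun i _ => norm_nonneg _
    set η : ℝ := min 1 (c / (2*(M+1))) with hη
    have hηpos : 0 < η := lt_min one_pos (by positivity)
    have hη1 : η ≤ 1 := min_le_left _ _
    have hηc : (M+1) * η ≤ c/2 := by
      have h2 : η ≤ c / (2*(M+1)) := min_le_right _ _
      have h3 : η * (2*(M+1)) ≤ c := by
        rw [← le_div_iff₀ (by positivity)]; exact h2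
      nlinarith
    -- approximate conjugates
    have happrox : ∀ q : K, ∃ w ∈ A, ∀ x ∈ K, ‖w x - (starRingEnd ℂ) (u q x)‖ ≤ η := by
      intro q
      obtain ⟨g, hgmem, hgd⟩ := hdense.exists_dist_lt (star ((u q).restrict K)) hηpos
      obtain ⟨w, hwA, hwr⟩ := hgmem
      refine ⟨w, hwA, fun x hx => ?_⟩
      calc ‖w x - (starRingEnd ℂ) (u q x)‖
          = dist ((w.restrict K) ⟨x, hx⟩) ((star ((u q).restrict K)) ⟨x, hx⟩) := by
            simp [dist_eq_norm, ContinuousMap.restrict_apply, Complex.star_def]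
        _ ≤ dist (w.restrict K) (star ((u q).restrict K)) :=
            ContinuousMap.dist_apply_le_dist _
        _ ≤ η := by rw [hwr, dist_comm]; exact hgd.le
    choose w hwA hwd using happrox
    set s : C(X, ℂ) := ∑ q ∈ t, u q * w q with hs
    have hsA : s ∈ A := A.sum_mem fun q _ => A.mul_mem (huA q) (hwA q)
    have hsp : s p = 0 := by
      rw [hs, ContinuousMap.coe_sum]
      simp only [Finset.sum_apply, ContinuousMap.mul_apply]
      exact Finset.sum_eq_zero fun q _ => by rw [hup q, zero_mul]
    -- real part lower bound on K
    have hsRe : ∀ x ∈ K, c/2 ≤ (s x).re := by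
      intro x hx
      have hsx : s x = ∑ q ∈ t, (u q x * w q x) := by
        rw [hs, ContinuousMap.coe_sum]
        simp [Finset.sum_apply]
      have hterm : ∀ q ∈ t, ‖u q x‖^2 - ‖u q‖ * η ≤ (u q x * w q x).re := by
        intro q _
        have hdecomp : u q x * w q x
            = u q x * (starRingEnd ℂ) (u q x) + u q x * (w q x - (starRingEnd ℂ) (u q x)) := by
          ring
        have h1 : (u q x * (starRingEnd ℂ) (u q x)).re = ‖u q x‖^2 := by
          rw [Complex.mul_conj, Complex.ofReal_re, Complex.sq_norm]
        have h2 : |(u q x * (w q x - (starRingEnd ℂ) (u q x))).re|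
            ≤ ‖u q‖ * η := by
          calc |(u q x * (w q x - (starRingEnd ℂ) (u q x))).re|
              ≤ ‖u q x * (w q x - (starRingEnd ℂ) (u q x))‖ := Complex.abs_re_le_norm _
            _ = ‖u q x‖ * ‖w q x - (starRingEnd ℂ) (u q x)‖ := norm_mul _ _
            _ ≤ ‖u q‖ * η := by
                refine mul_le_mul ((u q).norm_coe_le_norm x) (hwd q x hx) (norm_nonneg _)
                  (norm_nonneg _)
        rw [hdecomp, Complex.add_re, h1]
        have := abs_le.mp h2
        linarith [this.1]
      have hsum : ∑ q ∈ t, (‖u q x‖^2 - ‖u q‖ * η) ≤ (s x).re := by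
        rw [hsx, Complex.re_sum]
        exact Finset.sum_le_sum hterm
      have hexp : ∑ q ∈ t, (‖u q x‖^2 - ‖u q‖ * η) = σ x - M * η := by
        rw [Finset.sum_sub_distrib, ← Finset.sum_mul]
      have hMη : M * η ≤ c/2 := le_trans (by nlinarith) hηc
      have := hcK x hx
      rw [hexp] at hsum
      linarith
    -- upper bound for ‖s x‖ on K
    set M2 : ℝ := ∑ q ∈ t, ‖u q‖ * (‖u q‖ + 1) with hM2
    have hM20 : 0 ≤ M2 := Finset.sum_nonneg fun i _ => by positivity
    have hsb : ∀ x ∈ K, ‖s x‖ ≤ M2 := by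
      intro x hx
      have hsx : s x = ∑ q ∈ t, (u q x * w q x) := by
        rw [hs, ContinuousMap.coe_sum]
        simp [Finset.sum_apply]
      rw [hsx]
      refine le_trans (norm_sum_le _ _) (Finset.sum_le_sum fun q hq => ?_)
      rw [norm_mul]
      have hw : ‖w q x‖ ≤ ‖u q‖ + 1 := by
        have h1 : ‖w q x - (starRingEnd ℂ) (u q x)‖ ≤ η := hwd q x hx
        have h2 : ‖(starRingEnd ℂ) (u q x)‖ = ‖u q x‖ := by
          simp
        have hid : w q x = (w q x - (starRingEnd ℂ) (u q x)) + (starRingEnd ℂ) (u q x) := by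
          ring
        calc ‖w q x‖ = ‖(w q x - (starRingEnd ℂ) (u q x)) + (starRingEnd ℂ) (u q x)‖ := by
              rw [← hid]
          _ ≤ ‖w q x - (starRingEnd ℂ) (u q x)‖ + ‖(starRingEnd ℂ) (u q x)‖ := norm_add_le _ _
          _ ≤ η + ‖u q x‖ := add_le_add h1 h2.le
          _ ≤ 1 + ‖u q‖ := add_le_add hη1 ((u q).norm_coe_le_norm x)
          _ = ‖u q‖ + 1 := by ring
      exact mul_le_mul ((u q).norm_coe_le_norm x) hw (norm_nonneg _) (norm_nonneg _)
    -- the peaking function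
    set τ : ℝ := c / (2*(M2^2+1)) with hτ
    have hτpos : 0 < τ := by positivity
    set f : C(X, ℂ) := 1 - (τ : ℂ) • s with hf
    have hfA : f ∈ A := A.sub_mem (A.one_mem) (A.smul_mem hsA _)
    have hfp : ‖f p‖ = 1 := by
      rw [hf]
      simp [hsp]
    have hfK : ∀ x ∈ K, ‖f x‖ < 1 := by
      intro x hx
      have hval : f x = 1 - (τ : ℂ) * s x := by rw [hf]; simp [Complex.coe_smul]
      have hre : ((τ : ℂ) * s x).re = τ * (s x).re := by
        simp [Complex.mul_re, Complex.ofReal_re, Complex.ofReal_im]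
      have hnrm : ‖(τ : ℂ) * s x‖ = τ * ‖s x‖ := by
        rw [norm_mul, Complex.norm_real, Real.norm_eq_abs, abs_of_pos hτpos]
      have hsq : ‖f x‖^2 = 1 - 2*(τ * (s x).re) + (τ * ‖s x‖)^2 := by
        rw [hval, norm_one_sub_sq, hre, hnrm]
      have h1 : c/2 ≤ (s x).re := hsRe x hx
      have h2 : ‖s x‖ ≤ M2 := hsb x hx
      have hτM2 : τ * M2^2 ≤ c/2 := by
        rw [hτ]
        rw [div_mul_eq_mul_div, div_le_div_iff₀ (by positivity) (by norm_num)]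
        nlinarith
      have hsq2 : ‖f x‖^2 ≤ 1 - τ * c/2 := by
        have hs0 : 0 ≤ ‖s x‖ := norm_nonneg _
        have hss : ‖s x‖^2 ≤ M2^2 := by nlinarith
        have e1 : τ * (c/2) ≤ τ * (s x).re := mul_le_mul_of_nonneg_left h1 hτpos.le
        have e2 : τ^2 * ‖s x‖^2 ≤ τ^2 * M2^2 := mul_le_mul_of_nonneg_left hss (sq_nonneg τ)
        have e3 : τ * (τ * M2^2) ≤ τ * (c/2) := mul_le_mul_of_nonneg_left hτM2 hτpos.le
        nlinarith [hsq, e1, e2, e3]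
      nlinarith [norm_nonneg (f x), sq_nonneg (‖f x‖ - 1), mul_pos hτpos hcpos]
    obtain ⟨x, hxK, hxle⟩ := domK f hfA
    have := hfK x hxK
    rw [hfp] at hxle
    linarith

open Filter Topology in
/-- Peak-point lemma: any point outside the kernel can be "peaked" over any
closed set avoiding it, by a member of `A`. -/
lemma peak_lemma (K : Set X) (hKperf : Perfect K) (hKne : K.Nonempty)
    (hKmax : ∀ P : Set X, Perfect P → P ⊆ K)
    (A : Subalgebra ℂ C(X, ℂ)) (hA : A.SeparatesPoints)
    (hdense : Dense (restrictSet A K))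
    {p : X} (hpK : p ∉ K) {S : Set X} (hScl : IsClosed S) (hpS : p ∉ S) :
    ∃ f ∈ A, ∀ x ∈ S, ‖f x‖ < ‖f p‖ := by
  by_contra hcon
  push_neg at hcon
  set D : Set (Set X) := {G | G ⊆ S ∧ IsClosed G ∧ ∀ f ∈ A, ∃ x ∈ G, ‖f p‖ ≤ ‖f x‖} with hD
  have hchain : ∀ c ⊆ D, IsChain (· ⊆ ·) c → c.Nonempty →
      ∃ lb ∈ D, ∀ s ∈ c, lb ⊆ s := by
    intro c hc hch hne
    refine ⟨⋂₀ c, ⟨?_, ?_, ?_⟩, fun G hG => sInter_subset_of_mem hG⟩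
    · obtain ⟨G, hG⟩ := hne
      exact (sInter_subset_of_mem hG).trans (hc hG).1
    · exact isClosed_sInter fun G hG => (hc hG).2.1
    · intro f hf
      haveI : Nonempty c := hne.to_subtype
      set Z : c → Set X := fun G => {x ∈ (G : Set X) | ‖f p‖ ≤ ‖f x‖} with hZ
      have hZeq : ∀ G : c, Z G = (G : Set X) ∩ {x | ‖f p‖ ≤ ‖f x‖} := fun G => rfl
      have hZcl : ∀ G : c, IsClosed (Z G) := by
        intro G
        rw [hZeq]
        exact ((hc G.2).2.1).inter (isClosed_le continuous_const (f.continuous.norm))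
      have hZne : ∀ G : c, (Z G).Nonempty := by
        intro G
        obtain ⟨x, hx1, hx2⟩ := (hc G.2).2.2 f hf
        exact ⟨x, hx1, hx2⟩
      have hdir : Directed (· ⊇ ·) Z := by
        intro G1 G2
        rcases hch.total G1.2 G2.2 with h | h
        · exact ⟨G1, subset_rfl, fun x hx => ⟨h hx.1, hx.2⟩⟩
        · exact ⟨G2, fun x hx => ⟨h hx.1, hx.2⟩, subset_rfl⟩
      obtain ⟨x, hx⟩ := IsCompact.nonempty_iInter_of_directed_nonempty_isCompact_isClosed
        Z hdir hZne (fun G => (hZcl G).isCompact) hZcl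
      rw [mem_iInter] at hx
      refine ⟨x, ?_, ?_⟩
      · intro G hG
        exact (hx ⟨G, hG⟩).1
      · obtain ⟨G, hG⟩ := hne
        exact (hx ⟨G, hG⟩).2
  obtain ⟨G₀, -, hG₀min⟩ := zorn_superset_nonempty D hchain S ⟨subset_rfl, hScl, hcon⟩
  obtain ⟨hG₀S, hG₀cl, hG₀dom⟩ := hG₀min.prop
  have hpre : Preperfect G₀ := by
    by_contra hnp
    rw [Preperfect] at hnp; push_neg at hnp
    obtain ⟨q, hqG₀, hqacc⟩ := hnp
    rw [accPt_iff_nhds] at hqacc; push_neg at hqacc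
    obtain ⟨U, hU, hUq⟩ := hqacc
    set G₁ : Set X := G₀ \ {q} with hG₁def
    have hG₁cl : IsClosed G₁ := by
      have h1 : closure G₁ ⊆ G₀ := closure_minimal diff_subset hG₀cl
      have h2 : q ∉ closure G₁ := by
        rw [mem_closure_iff_nhds]
        push_neg
        refine ⟨U, hU, ?_⟩
        rw [eq_empty_iff_forall_notMem]
        rintro y ⟨hyU, hyG₀, hyq⟩
        exact hyq (hUq y ⟨hyU, hyG₀⟩)
      apply isClosed_of_closure_subset
      intro y hy
      refine ⟨h1 hy, fun hyq => h2 ?_⟩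
      rw [mem_singleton_iff] at hyq
      rwa [hyq] at hy
    have hG₁notD : G₁ ∉ D := by
      intro hmem
      have hsub : G₀ ⊆ G₁ := hG₀min.2 hmem diff_subset
      exact (hsub hqG₀).2 rfl
    have hnd : ∃ f₀ ∈ A, ∀ x ∈ G₁, ‖f₀ x‖ < ‖f₀ p‖ := by
      by_contra h; push_neg at h
      exact hG₁notD ⟨diff_subset.trans hG₀S, hG₁cl, h⟩
    obtain ⟨f₀, hf₀A, hf₀⟩ := hnd
    have hq0 : ‖f₀ p‖ ≤ ‖f₀ q‖ := by
      obtain ⟨x, hxG₀, hxle⟩ := hG₀dom f₀ hf₀A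
      rcases eq_or_ne x q with rfl | hne
      · exact hxle
      · exact absurd hxle (not_le.mpr (hf₀ x ⟨hxG₀, hne⟩))
    have hqS : q ∈ S := hG₀S hqG₀
    have hpq : p ≠ q := fun h => hpS (h ▸ hqS)
    have hfinal : ¬ (∀ f ∈ A, ‖f p‖ ≤ ‖f q‖) := by
      intro hdom1
      have hagree : ∀ f ∈ A, f p = f q := by
        intro f hf
        have h1 := hdom1 (f - (f q) • 1)
          (A.sub_mem hf (A.smul_mem (one_mem A) _))
        simp only [ContinuousMap.sub_apply, ContinuousMap.smul_apply,
          ContinuousMap.one_apply, smul_eq_mul, mul_one] at h1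
        have : ‖f p - f q‖ ≤ 0 := by simpa using h1
        have := le_antisymm this (norm_nonneg _)
        rwa [norm_eq_zero, sub_eq_zero] at this
      obtain ⟨f', ⟨f, hfA, rfl⟩, hfne⟩ := hA hpq
      exact hfne (hagree f hfA)
    rcases G₁.eq_empty_or_nonempty with hG₁e | hG₁ne
    · apply hfinal
      intro f hf
      obtain ⟨x, hxG₀, hxle⟩ := hG₀dom f hf
      rcases eq_or_ne x q with rfl | hne
      · exact hxle
      · exact absurd (show x ∈ G₁ from ⟨hxG₀, hne⟩) (by rw [hG₁e]; exact notMem_empty x)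
    · have hf₀q : f₀ q ≠ 0 := by
        intro h0
        obtain ⟨y, hy⟩ := hG₁ne
        have := hf₀ y hy
        rw [h0, norm_zero] at hq0
        have hle0 := le_antisymm hq0 (norm_nonneg _)
        rw [hle0] at this
        exact absurd this (not_lt.mpr (norm_nonneg _))
      set g : C(X, ℂ) := (f₀ q)⁻¹ • f₀ with hgdef
      have hgA : g ∈ A := A.smul_mem hf₀A _
      have hgq : g q = 1 := by
        rw [hgdef]
        simp only [ContinuousMap.smul_apply, smul_eq_mul]
        exact inv_mul_cancel₀ hf₀q
      have hgval : ∀ x, ‖g x‖ = ‖f₀ q‖⁻¹ * ‖f₀ x‖ := by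
        intro x
        rw [hgdef]
        simp only [ContinuousMap.smul_apply, smul_eq_mul, norm_mul, norm_inv]
      have hgp1 : ‖g p‖ ≤ 1 := by
        rw [hgval]
        rw [inv_mul_le_iff₀ (norm_pos_iff.mpr hf₀q), mul_one]
        exact hq0
      have hgG₁ : ∀ x ∈ G₁, ‖g x‖ < ‖g p‖ := by
        intro x hx
        rw [hgval, hgval]
        exact mul_lt_mul_of_pos_left (hf₀ x hx) (inv_pos.mpr (norm_pos_iff.mpr hf₀q))
      obtain ⟨x₁, hx₁G₁, hx₁max⟩ := hG₁cl.isCompact.exists_isMaxOn hG₁ne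
        (g.continuous.norm.continuousOn)
      set δ : ℝ := ‖g x₁‖ with hδdef
      have hδmax : ∀ x ∈ G₁, ‖g x‖ ≤ δ := fun x hx => hx₁max hx
      have hδlt : δ < ‖g p‖ := hgG₁ x₁ hx₁G₁
      have hδ0 : 0 ≤ δ := norm_nonneg _
      by_cases hgp : ‖g p‖ = 1
      · apply hfinal
        intro f hf
        refine le_of_forall_pos_le_add ?_
        intro ε hε
        have hδ1 : δ < 1 := hgp ▸ hδlt
        have htend : Tendsto (fun n : ℕ => ‖f‖ * δ ^ n) atTop (𝓝 0) := by
          have := (tendsto_pow_atTop_nhds_zero_of_lt_one hδ0 hδ1).const_mul ‖f‖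
          simpa using this
        obtain ⟨n, hn⟩ := (htend.eventually_lt_const hε).exists
        obtain ⟨x, hxG₀, hxle⟩ := hG₀dom (f * g ^ n) (A.mul_mem hf (pow_mem hgA n))
        have hlhs : ‖(f * g ^ n) p‖ = ‖f p‖ := by
          simp only [ContinuousMap.mul_apply, ContinuousMap.pow_apply, norm_mul, norm_pow]
          rw [hgp, one_pow, mul_one]
        rcases eq_or_ne x q with rfl | hxq
        · have hrhs : ‖(f * g ^ n) x‖ = ‖f x‖ := by
            simp only [ContinuousMap.mul_apply, ContinuousMap.pow_apply, norm_mul, norm_pow]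
            rw [hgq, norm_one, one_pow, mul_one]
          rw [hlhs, hrhs] at hxle
          linarith
        · have hxG₁ : x ∈ G₁ := ⟨hxG₀, hxq⟩
          have hrhs : ‖(f * g ^ n) x‖ ≤ ‖f‖ * δ ^ n := by
            simp only [ContinuousMap.mul_apply, ContinuousMap.pow_apply, norm_mul, norm_pow]
            exact mul_le_mul (f.norm_coe_le_norm x)
              (pow_le_pow_left₀ (norm_nonneg _) (hδmax x hxG₁) n)
              (by positivity) (norm_nonneg _)
          rw [hlhs] at hxle
          have : ‖f p‖ < ε := lt_of_le_of_lt (hxle.trans hrhs) hn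
          have h0 : (0:ℝ) ≤ ‖f q‖ := norm_nonneg _
          linarith
      · have hgplt : ‖g p‖ < 1 := lt_of_le_of_ne hgp1 hgp
        have hδ1 : δ < 1 := hδlt.trans hgplt
        have domG₁ : ∀ f ∈ A, ∃ x ∈ G₁, ‖f p‖ ≤ ‖f x‖ := by
          intro f hf
          obtain ⟨xf, hxfG₁, hxfmax⟩ := hG₁cl.isCompact.exists_isMaxOn hG₁ne
            (f.continuous.norm.continuousOn)
          set Mf : ℝ := ‖f xf‖ with hMf
          have hw : ∀ n : ℕ, ∃ x ∈ G₀,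
              ‖(f * (1 - g ^ (n+1))) p‖ ≤ ‖(f * (1 - g ^ (n+1))) x‖ :=
            fun n => hG₀dom _ (A.mul_mem hf (A.sub_mem (one_mem A) (pow_mem hgA (n+1))))
          choose xw hxwG hxwle using hw
          by_cases hall : ∀ n, xw n ≠ q
          · refine ⟨xf, hxfG₁, ?_⟩
            have hineq : ∀ n : ℕ,
                ‖f p‖ * (1 - ‖g p‖ ^ (n+1)) ≤ Mf * (1 + δ ^ (n+1)) := by
              intro n
              have hval : (f * (1 - g ^ (n+1))) p = f p * (1 - (g p) ^ (n+1)) := by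
                simp [ContinuousMap.mul_apply, ContinuousMap.pow_apply]
              have h1 : ‖f p‖ * (1 - ‖g p‖ ^ (n+1)) ≤ ‖(f * (1 - g ^ (n+1))) p‖ := by
                rw [hval, norm_mul]
                refine mul_le_mul_of_nonneg_left ?_ (norm_nonneg _)
                calc 1 - ‖g p‖ ^ (n+1) = ‖(1:ℂ)‖ - ‖(g p) ^ (n+1)‖ := by
                      rw [norm_one, norm_pow]
                  _ ≤ ‖1 - (g p) ^ (n+1)‖ := norm_sub_norm_le _ _
              have hxwG₁ : xw n ∈ G₁ := ⟨hxwG n, hall n⟩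
              have hval2 : (f * (1 - g ^ (n+1))) (xw n)
                  = f (xw n) * (1 - (g (xw n)) ^ (n+1)) := by
                simp [ContinuousMap.mul_apply, ContinuousMap.pow_apply]
              have h2 : ‖(f * (1 - g ^ (n+1))) (xw n)‖ ≤ Mf * (1 + δ ^ (n+1)) := by
                rw [hval2, norm_mul]
                refine mul_le_mul (hxfmax hxwG₁) ?_ (norm_nonneg _) (norm_nonneg _)
                calc ‖1 - (g (xw n)) ^ (n+1)‖ ≤ ‖(1:ℂ)‖ + ‖(g (xw n)) ^ (n+1)‖ :=
                      norm_sub_le _ _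
                  _ = 1 + ‖g (xw n)‖ ^ (n+1) := by rw [norm_one, norm_pow]
                  _ ≤ 1 + δ ^ (n+1) := by
                      have := pow_le_pow_left₀ (norm_nonneg _) (hδmax _ hxwG₁) (n+1)
                      linarith
              exact le_trans h1 (le_trans (hxwle n) h2)
            have hL : Tendsto (fun n : ℕ => ‖f p‖ * (1 - ‖g p‖ ^ (n+1))) atTop
                (𝓝 (‖f p‖ * (1 - 0))) := by
              refine tendsto_const_nhds.mul (tendsto_const_nhds.sub ?_)
              exact (tendsto_pow_atTop_nhds_zero_of_lt_one (norm_nonneg _) hgplt).comp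
                (tendsto_add_atTop_nat 1)
            have hR : Tendsto (fun n : ℕ => Mf * (1 + δ ^ (n+1))) atTop
                (𝓝 (Mf * (1 + 0))) := by
              refine tendsto_const_nhds.mul (tendsto_const_nhds.add ?_)
              exact (tendsto_pow_atTop_nhds_zero_of_lt_one hδ0 hδ1).comp
                (tendsto_add_atTop_nat 1)
            have := le_of_tendsto_of_tendsto' hL hR hineq
            simpa using this
          · push_neg at hall
            obtain ⟨n, hn⟩ := hall
            have h0 := hxwle n
            rw [hn] at h0
            have hq1 : (f * (1 - g ^ (n+1))) q = 0 := by
              simp [ContinuousMap.mul_apply, ContinuousMap.pow_apply, hgq]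
            rw [hq1, norm_zero] at h0
            have hval : (f * (1 - g ^ (n+1))) p = f p * (1 - (g p) ^ (n+1)) := by
              simp [ContinuousMap.mul_apply, ContinuousMap.pow_apply]
            rw [hval] at h0
            have h0' : ‖f p * (1 - (g p) ^ (n+1))‖ = 0 := le_antisymm h0 (norm_nonneg _)
            rw [norm_eq_zero, mul_eq_zero] at h0'
            have hne1 : (1 : ℂ) - (g p) ^ (n+1) ≠ 0 := by
              intro hzero
              have : (g p) ^ (n+1) = 1 := by
                have := sub_eq_zero.mp hzero
                exact this.symm
              have hlt : ‖(g p) ^ (n+1)‖ < 1 := by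
                rw [norm_pow]
                exact pow_lt_one₀ (norm_nonneg _) hgplt (Nat.succ_ne_zero n)
              rw [this, norm_one] at hlt
              exact lt_irrefl _ hlt
            have hfp0 : f p = 0 := h0'.resolve_right hne1
            obtain ⟨y, hy⟩ := hG₁ne
            exact ⟨y, hy, by rw [hfp0]; simpa using norm_nonneg (f y)⟩
        obtain ⟨x, hxG₁, hxle⟩ := domG₁ f₀ hf₀A
        exact absurd hxle (not_le.mpr (hf₀ x hxG₁))
  have hperf : Perfect G₀ := ⟨hG₀cl, hpre⟩
  have hG₀K : G₀ ⊆ K := hKmax _ hperf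
  exact K_contra K hKperf.closed hKne A hA hdense hpK
    (fun f hf => (hG₀dom f hf).imp fun x hx => ⟨hG₀K hx.1, hx.2⟩)

end Helpers

/-- Let `X` be a compact Hausdorff non-scattered space with perfect kernel `K = ker X`
(the largest perfect subset, nonempty) and let `A ≤ C(X, ℂ)` be a subalgebra separating
points (and containing constants).  If `A↾K` is dense in `C(K, ℂ)`, then `A` is dense
in `C(X, ℂ)`. -/
theorem stmt13 {X : Type*} [TopologicalSpace X] [CompactSpace X] [T2Space X]
    (K : Set X) (hKperf : Perfect K) (hKne : K.Nonempty)
    (hKmax : ∀ P : Set X, Perfect P → P ⊆ K)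
    (A : Subalgebra ℂ C(X, ℂ)) (hA : A.SeparatesPoints)
    (hdense : Dense (restrictSet A K)) :
    Dense (A : Set C(X, ℂ)) := by
  set B := A.topologicalClosure with hB
  have hBclosed : IsClosed (B : Set C(X, ℂ)) := A.isClosed_topologicalClosure
  have hAB : A ≤ B := A.le_topologicalClosure
  haveI : CompactSpace K := isCompact_iff_compactSpace.mp hKperf.closed.isCompact
  set C : Set (Set X) :=
    {F | IsClosed F ∧ K ⊆ F ∧ ∀ h : C(X, ℂ), (∀ x ∈ F, h x = 0) → h ∈ B} with hC
  have huniv : univ ∈ C := by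
    refine ⟨isClosed_univ, subset_univ K, fun h hh => ?_⟩
    have : h = 0 := ContinuousMap.ext fun x => hh x (mem_univ x)
    rw [this]; exact zero_mem B
  have hchain : ∀ c ⊆ C, IsChain (· ⊆ ·) c → c.Nonempty → ∃ lb ∈ C, ∀ s ∈ c, lb ⊆ s := by
    intro c hc hch hne
    refine ⟨⋂₀ c, ⟨isClosed_sInter fun F hF => (hc hF).1,
      subset_sInter fun F hF => (hc hF).2.1, ?_⟩, fun F hF => sInter_subset_of_mem hF⟩
    intro h hh
    apply mem_of_approx hBclosed
    intro ε hε
    have hex : ∃ F ∈ c, ∀ x ∈ F, ‖h x‖ ≤ ε := by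
      by_contra hnex; push_neg at hnex
      haveI : Nonempty c := hne.to_subtype
      set Z : c → Set X := fun F => {x ∈ (F : Set X) | ε ≤ ‖h x‖} with hZ
      have hZeq : ∀ F : c, Z F = (F : Set X) ∩ {x | ε ≤ ‖h x‖} := fun F => rfl
      have hZcl : ∀ F : c, IsClosed (Z F) := by
        intro F
        rw [hZeq]
        exact ((hc F.2).1).inter (isClosed_le continuous_const (h.continuous.norm))
      have hZne : ∀ F : c, (Z F).Nonempty := by
        intro F
        obtain ⟨x, hx1, hx2⟩ := hnex F F.2
        exact ⟨x, hx1, hx2.le⟩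
      have hdir : Directed (· ⊇ ·) Z := by
        intro F1 F2
        rcases hch.total F1.2 F2.2 with hle | hle
        · exact ⟨F1, subset_rfl, fun x hx => ⟨hle hx.1, hx.2⟩⟩
        · exact ⟨F2, fun x hx => ⟨hle hx.1, hx.2⟩, subset_rfl⟩
      obtain ⟨x, hx⟩ := IsCompact.nonempty_iInter_of_directed_nonempty_isCompact_isClosed
        Z hdir hZne (fun F => (hZcl F).isCompact) hZcl
      rw [mem_iInter] at hx
      have hx0 : h x = 0 := by
        apply hh
        rw [mem_sInter]
        intro F hF
        exact (hx ⟨F, hF⟩).1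
      obtain ⟨F, hF⟩ := hne
      have := (hx ⟨F, hF⟩).2
      rw [hx0, norm_zero] at this
      linarith
    obtain ⟨F, hFc, hF⟩ := hex
    obtain ⟨w, hw0, hwnorm⟩ := trunc_exists h hε
    have hwB : w ∈ B := (hc hFc).2.2 w fun x hx => hw0 x (hF x hx)
    exact ⟨w, hwB, by rwa [norm_sub_rev] at hwnorm⟩
  obtain ⟨F₀, -, hF₀min⟩ := zorn_superset_nonempty C hchain univ huniv
  obtain ⟨hF₀cl, hKF₀, hF₀van⟩ := hF₀min.prop
  have hF₀K : F₀ = K := by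
    by_contra hneq
    have hFKne : (F₀ \ K).Nonempty := by
      rw [diff_nonempty]
      intro hsub
      exact hneq (le_antisymm hsub hKF₀)
    set Cl : Set X := closure (F₀ \ K) with hCl
    have hnp : ¬ Preperfect Cl := by
      intro hp
      have hperf : Perfect Cl := ⟨isClosed_closure, hp⟩
      obtain ⟨x, hx⟩ := hFKne
      exact hx.2 (hKmax _ hperf (subset_closure hx))
    rw [Preperfect] at hnp; push_neg at hnp
    obtain ⟨p, hpCl, hpacc⟩ := hnp
    rw [accPt_iff_nhds] at hpacc; push_neg at hpacc
    obtain ⟨U, hU, hUp⟩ := hpacc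
    have hpFK : p ∈ F₀ \ K := by
      obtain ⟨y, hyU, hyFK⟩ := mem_closure_iff_nhds.mp hpCl U hU
      have : y = p := hUp y ⟨hyU, subset_closure hyFK⟩
      rwa [← this]
    have hpF₀ : p ∈ F₀ := hpFK.1
    have hpK : p ∉ K := hpFK.2
    set F₁ : Set X := F₀ \ {p} with hF₁def
    have hV : (U ∩ Kᶜ) ∈ 𝓝 p := inter_mem hU (hKperf.closed.isOpen_compl.mem_nhds hpK)
    have hVF₀ : ∀ y ∈ (U ∩ Kᶜ) ∩ F₀, y = p := by
      rintro y ⟨⟨hyU, hyK⟩, hyF₀⟩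
      exact hUp y ⟨hyU, subset_closure ⟨hyF₀, hyK⟩⟩
    have hF₁cl : IsClosed F₁ := by
      have h1 : closure F₁ ⊆ F₀ := closure_minimal diff_subset hF₀cl
      have h2 : p ∉ closure F₁ := by
        rw [mem_closure_iff_nhds]
        push_neg
        refine ⟨U ∩ Kᶜ, hV, ?_⟩
        rw [eq_empty_iff_forall_notMem]
        rintro y ⟨hyV, hyF₀, hyp⟩
        exact hyp (hVF₀ y ⟨hyV, hyF₀⟩)
      apply isClosed_of_closure_subset
      intro y hy
      refine ⟨h1 hy, fun hyp => h2 ?_⟩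
      rw [mem_singleton_iff] at hyp
      rwa [hyp] at hy
    have hKF₁ : K ⊆ F₁ := by
      intro x hx
      refine ⟨hKF₀ hx, fun hxp => hpK ?_⟩
      rw [mem_singleton_iff] at hxp
      rwa [hxp] at hx
    have hF₁notC : F₁ ∉ C := by
      intro hmem
      exact (hF₀min.2 hmem diff_subset hpF₀).2 rfl
    apply hF₁notC
    refine ⟨hF₁cl, hKF₁, ?_⟩
    intro h hh
    have hpF₁ : p ∉ F₁ := fun hp' => hp'.2 rfl
    obtain ⟨f, hfA, hfpk⟩ := peak_lemma K hKperf hKne hKmax A hA hdense hpK hF₁cl hpF₁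
    have hF₁ne : F₁.Nonempty := hKne.mono hKF₁
    have hfp : f p ≠ 0 := by
      obtain ⟨y, hy⟩ := hF₁ne
      have := hfpk y hy
      intro h0
      rw [h0, norm_zero] at this
      exact absurd this (not_lt.mpr (norm_nonneg _))
    set g : C(X, ℂ) := (f p)⁻¹ • f with hgdef
    have hgB : g ∈ B := hAB (A.smul_mem hfA _)
    have hgp : g p = 1 := by
      rw [hgdef]
      simp only [ContinuousMap.smul_apply, smul_eq_mul]
      exact inv_mul_cancel₀ hfp
    have hgF₁ : ∀ x ∈ F₁, ‖g x‖ < 1 := by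
      intro x hx
      rw [hgdef]
      simp only [ContinuousMap.smul_apply, smul_eq_mul, norm_mul, norm_inv]
      rw [inv_mul_lt_iff₀ (norm_pos_iff.mpr hfp), mul_one]
      exact hfpk x hx
    obtain ⟨x₁, hx₁F₁, hx₁max⟩ := hF₁cl.isCompact.exists_isMaxOn hF₁ne
      (g.continuous.norm.continuousOn)
    set δ : ℝ := ‖g x₁‖ with hδdef
    have hδmax : ∀ x ∈ F₁, ‖g x‖ ≤ δ := fun x hx => hx₁max hx
    have hδ1 : δ < 1 := hgF₁ x₁ hx₁F₁
    have hδ0 : 0 ≤ δ := norm_nonneg _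
    apply mem_of_approx hBclosed
    intro ε hε
    have htend : Tendsto (fun n : ℕ => ‖h p‖ * δ ^ n) atTop (𝓝 0) := by
      have := (tendsto_pow_atTop_nhds_zero_of_lt_one hδ0 hδ1).const_mul ‖h p‖
      simpa using this
    obtain ⟨n, hn⟩ := (htend.eventually_lt_const hε).exists
    set u : C(X, ℂ) := (h p) • g ^ n with hu
    have huB : u ∈ B := B.smul_mem (pow_mem hgB n) _
    have hbound : ∀ x ∈ F₀, ‖(h - u) x‖ ≤ ε := by
      intro x hx
      rcases eq_or_ne x p with rfl | hxp
      · have : (h - u) x = 0 := by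
          rw [hu]
          simp [ContinuousMap.sub_apply, ContinuousMap.smul_apply,
            ContinuousMap.pow_apply, hgp]
        rw [this, norm_zero]
        exact hε.le
      · have hxF₁ : x ∈ F₁ := ⟨hx, hxp⟩
        have hhx : h x = 0 := hh x hxF₁
        have : (h - u) x = -(h p * (g x) ^ n) := by
          rw [hu]
          simp [ContinuousMap.sub_apply, ContinuousMap.smul_apply,
            ContinuousMap.pow_apply, hhx]
        rw [this, norm_neg, norm_mul, norm_pow]
        calc ‖h p‖ * ‖g x‖ ^ n ≤ ‖h p‖ * δ ^ n := by
              refine mul_le_mul_of_nonneg_left ?_ (norm_nonneg _)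
              exact pow_le_pow_left₀ (norm_nonneg _) (hδmax x hxF₁) n
          _ ≤ ε := hn.le
    obtain ⟨w, hw0, hwnorm⟩ := trunc_exists (h - u) hε
    have hwB : w ∈ B := hF₀van w fun x hx => hw0 x (hbound x hx)
    refine ⟨u + w, B.add_mem huB hwB, ?_⟩
    have heq : h - (u + w) = -(w - (h - u)) := by ring
    rw [heq, norm_neg]
    exact hwnorm
  rw [hF₀K] at hF₀van
  have hall : ∀ h : C(X, ℂ), h ∈ B := by
    intro h
    apply mem_of_approx hBclosed
    intro ε hε
    obtain ⟨g', hg'mem, hg'd⟩ := hdense.exists_dist_lt (h.restrict K) hε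
    obtain ⟨g, hgA, hgr⟩ := hg'mem
    have hgB : g ∈ B := hAB hgA
    have hbd : ∀ x ∈ K, ‖(h - g) x‖ ≤ ε := by
      intro x hx
      have h1 : dist ((h.restrict K) ⟨x, hx⟩) ((g.restrict K) ⟨x, hx⟩)
          ≤ dist (h.restrict K) (g.restrict K) := ContinuousMap.dist_apply_le_dist _
      rw [← hgr] at hg'd
      have h2 : ‖(h - g) x‖ = dist ((h.restrict K) ⟨x, hx⟩) ((g.restrict K) ⟨x, hx⟩) := by
        simp [dist_eq_norm, ContinuousMap.restrict_apply, ContinuousMap.sub_apply]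
      rw [h2]
      exact h1.trans hg'd.le
    obtain ⟨w, hw0, hwnorm⟩ := trunc_exists (h - g) hε
    have hwB : w ∈ B := hF₀van w fun x hx => hw0 x (hbd x hx)
    refine ⟨g + w, B.add_mem hgB hwB, ?_⟩
    have heq : h - (g + w) = -(w - (h - g)) := by ring
    rw [heq, norm_neg]
    exact hwnorm
  have hBuniv : (B : Set C(X, ℂ)) = univ := eq_univ_of_forall hall
  rw [dense_iff_closure_eq, ← Subalgebra.topologicalClosure_coe, ← hB, hBuniv]
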